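/- In the Morton-hybrid layout with threshold T, an aligned sub-matrix arising in the Morton recursion (i.e., a quadrant at some recursion level) of size 2^a·T × 2^a·T occupies a contiguous range of 4^a·T² linear addresses. -/

import Mathlib

/-- The Morton (Z-order) index of Cartesian coordinates `(i, j)` in a
`2^m × 2^m` matrix: bit interleaving, `Σ_k (2·i_k + j_k)·4^k`. -/
def mortonIndex (m i j : ℕ) : ℕ :=
  ∑ k ∈ Finset.range m, (2 * (i / 2 ^ k % 2) + j / 2 ^ k % 2) * 4 ^ k

/-- The Morton-hybrid linear address of entry `(i, j)` in a `2^m × 2^m` matrix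
with truncation threshold `T = 2^t`: the `T × T` blocks are ordered by the Morton
index of their block coordinates, and each block is stored row-major. -/
def mhAddr (m t i j : ℕ) : ℕ :=
  (2 ^ t) ^ 2 * mortonIndex (m - t) (i / 2 ^ t) (j / 2 ^ t) +
    i % 2 ^ t * 2 ^ t + j % 2 ^ t

lemma mortonIndex_zero (i j : ℕ) : mortonIndex 0 i j = 0 := by simp [mortonIndex]

lemma mortonIndex_succ (a u v : ℕ) :
    mortonIndex (a + 1) u v =
      2 * (u % 2) + v % 2 + 4 * mortonIndex a (u / 2) (v / 2) := by
  unfold mortonIndex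
  rw [Finset.sum_range_succ', Finset.mul_sum]
  simp only [pow_zero, Nat.div_one, pow_succ, mul_one]
  rw [add_comm]
  congr 1
  apply Finset.sum_congr rfl
  intro k _
  rw [mul_comm ((2:ℕ)^k) 2, ← Nat.div_div_eq_div_mul, ← Nat.div_div_eq_div_mul]
  ring

lemma mortonIndex_lt (a : ℕ) : ∀ u v : ℕ, u < 2 ^ a → v < 2 ^ a → mortonIndex a u v < 4 ^ a := by
  induction a with
  | zero => intro u v hu hv; simp [mortonIndex]
  | succ a ih =>
    intro u v hu hv
    rw [mortonIndex_succ]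
    have h1 : u / 2 < 2 ^ a := Nat.div_lt_of_lt_mul (by rw [mul_comm, ← pow_succ]; exact hu)
    have h2 : v / 2 < 2 ^ a := Nat.div_lt_of_lt_mul (by rw [mul_comm, ← pow_succ]; exact hv)
    have := ih (u / 2) (v / 2) h1 h2
    have hu2 : u % 2 ≤ 1 := Nat.lt_succ_iff.mp (Nat.mod_lt _ (by norm_num))
    have hv2 : v % 2 ≤ 1 := Nat.lt_succ_iff.mp (Nat.mod_lt _ (by norm_num))
    calc 2 * (u % 2) + v % 2 + 4 * mortonIndex a (u / 2) (v / 2)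
        ≤ 2 * 1 + 1 + 4 * mortonIndex a (u / 2) (v / 2) := by gcongr
      _ < 4 ^ (a + 1) := by rw [pow_succ]; omega

lemma mortonIndex_surj (a : ℕ) : ∀ z : ℕ, z < 4 ^ a →
    ∃ u v : ℕ, u < 2 ^ a ∧ v < 2 ^ a ∧ mortonIndex a u v = z := by
  induction a with
  | zero =>
    intro z hz
    exact ⟨0, 0, by norm_num, by norm_num, by simpa [mortonIndex] using (by omega : z = 0).symm⟩
  | succ a ih =>
    intro z hz
    have hz4 : z / 4 < 4 ^ a := Nat.div_lt_of_lt_mul (by rw [mul_comm, ← pow_succ]; exact hz)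
    obtain ⟨u', v', hu', hv', hM⟩ := ih (z / 4) hz4
    refine ⟨2 * u' + z % 4 / 2, 2 * v' + z % 2, ?_, ?_, ?_⟩
    · have : z % 4 / 2 ≤ 1 := by omega
      rw [pow_succ]; omega
    · have : z % 2 ≤ 1 := by omega
      rw [pow_succ]; omega
    · rw [mortonIndex_succ]
      have e1 : (2 * u' + z % 4 / 2) % 2 = z % 4 / 2 := by omega
      have e2 : (2 * v' + z % 2) % 2 = z % 2 := by omega
      have e3 : (2 * u' + z % 4 / 2) / 2 = u' := by omega
      have e4 : (2 * v' + z % 2) / 2 = v' := by omega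
      rw [e1, e2, e3, e4, hM]
      omega

lemma mortonIndex_split (a : ℕ) : ∀ n u v p q : ℕ, a ≤ n → u < 2 ^ a → v < 2 ^ a →
    mortonIndex n (u + p * 2 ^ a) (v + q * 2 ^ a) =
      mortonIndex a u v + 4 ^ a * mortonIndex (n - a) p q := by
  induction a with
  | zero => intro n u v p q _ hu hv; interval_cases u; interval_cases v; simp [mortonIndex_zero]
  | succ a ih =>
    intro n u v p q han hu hv
    obtain ⟨n', rfl⟩ : ∃ n', n = n' + 1 := ⟨n - 1, by omega⟩
    rw [mortonIndex_succ, mortonIndex_succ]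
    have ep : u + p * 2 ^ (a + 1) = u + 2 * (p * 2 ^ a) := by rw [pow_succ]; ring
    have eq' : v + q * 2 ^ (a + 1) = v + 2 * (q * 2 ^ a) := by rw [pow_succ]; ring
    have e1 : (u + p * 2 ^ (a + 1)) % 2 = u % 2 := by rw [ep]; omega
    have e2 : (v + q * 2 ^ (a + 1)) % 2 = v % 2 := by rw [eq']; omega
    have e3 : (u + p * 2 ^ (a + 1)) / 2 = u / 2 + p * 2 ^ a := by rw [ep]; omega
    have e4 : (v + q * 2 ^ (a + 1)) / 2 = v / 2 + q * 2 ^ a := by rw [eq']; omega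
    rw [e1, e2, e3, e4, ih n' (u / 2) (v / 2) p q (by omega)
      (Nat.div_lt_of_lt_mul (by rw [mul_comm, ← pow_succ]; exact hu))
      (Nat.div_lt_of_lt_mul (by rw [mul_comm, ← pow_succ]; exact hv))]
    have : n' + 1 - (a + 1) = n' - a := by omega
    rw [this, pow_succ]
    ring

lemma mortonIndex_zero_zero (a : ℕ) : mortonIndex a 0 0 = 0 := by simp [mortonIndex]


/-- In the Morton-hybrid layout with threshold `T = 2^t`, an
aligned sub-matrix arising in the Morton recursion (a recursion-level quadrant)
of size `2^a·T × 2^a·T` — rows `[p·2^a·T, (p+1)·2^a·T)`, columns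
`[q·2^a·T, (q+1)·2^a·T)` — occupies a contiguous range of `4^a·T²` linear
addresses; indeed the Morton indices of the dyadic square of block coordinates
`[p·2^a, (p+1)·2^a) × [q·2^a, (q+1)·2^a)` form the contiguous interval
`[MortonIndex(p·2^a, q·2^a), MortonIndex(p·2^a, q·2^a) + 4^a)`. -/
theorem aligned_quadrant_contiguous (m t a p q : ℕ) (ht : t ≤ m)
    (ha : a ≤ m - t)
    (hp : (p + 1) * 2 ^ a ≤ 2 ^ (m - t)) (hq : (q + 1) * 2 ^ a ≤ 2 ^ (m - t))
    (T n : ℕ) (hT : T = 2 ^ t) (hn : n = 2 ^ a * T) :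
    (∀ z : ℕ,
      (∃ u v : ℕ, p * 2 ^ a ≤ u ∧ u < (p + 1) * 2 ^ a ∧
          q * 2 ^ a ≤ v ∧ v < (q + 1) * 2 ^ a ∧ mortonIndex (m - t) u v = z) ↔
      (mortonIndex (m - t) (p * 2 ^ a) (q * 2 ^ a) ≤ z ∧
        z < mortonIndex (m - t) (p * 2 ^ a) (q * 2 ^ a) + 4 ^ a)) ∧
    ∃ α : ℕ, ∀ z : ℕ,
      (∃ i j : ℕ, p * n ≤ i ∧ i < (p + 1) * n ∧
          q * n ≤ j ∧ j < (q + 1) * n ∧ mhAddr m t i j = z) ↔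
      (α ≤ z ∧ z < α + 4 ^ a * T ^ 2) := by
  subst hn hT
  have hT0 : 0 < 2 ^ t := pow_pos (by norm_num) t
  have ha2 : 0 < 2 ^ a := pow_pos (by norm_num) a
  have hA0 : 0 < (2 ^ t) ^ 2 := pow_pos hT0 2
  have hbase : mortonIndex (m - t) (p * 2 ^ a) (q * 2 ^ a) =
      4 ^ a * mortonIndex (m - t - a) p q := by
    have := mortonIndex_split a (m - t) 0 0 p q ha ha2 ha2
    simpa [mortonIndex_zero_zero] using this
  have key : ∀ z : ℕ,
      (∃ u v : ℕ, p * 2 ^ a ≤ u ∧ u < (p + 1) * 2 ^ a ∧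
          q * 2 ^ a ≤ v ∧ v < (q + 1) * 2 ^ a ∧ mortonIndex (m - t) u v = z) ↔
      (mortonIndex (m - t) (p * 2 ^ a) (q * 2 ^ a) ≤ z ∧
        z < mortonIndex (m - t) (p * 2 ^ a) (q * 2 ^ a) + 4 ^ a) := by
    intro z
    constructor
    · rintro ⟨u, v, hu1, hu2, hv1, hv2, rfl⟩
      have ep : (p + 1) * 2 ^ a = p * 2 ^ a + 2 ^ a := by ring
      have eq' : (q + 1) * 2 ^ a = q * 2 ^ a + 2 ^ a := by ring
      have hu' : u - p * 2 ^ a < 2 ^ a := by omega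
      have hv' : v - q * 2 ^ a < 2 ^ a := by omega
      have hs := mortonIndex_split a (m - t) (u - p * 2 ^ a) (v - q * 2 ^ a) p q ha hu' hv'
      rw [Nat.sub_add_cancel hu1, Nat.sub_add_cancel hv1] at hs
      rw [hs, hbase]
      have := mortonIndex_lt a _ _ hu' hv'
      omega
    · rintro ⟨h1, h2⟩
      obtain ⟨u', v', hu', hv', hM⟩ :=
        mortonIndex_surj a (z - mortonIndex (m - t) (p * 2 ^ a) (q * 2 ^ a)) (by omega)
      have ep : (p + 1) * 2 ^ a = p * 2 ^ a + 2 ^ a := by ring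
      have eq' : (q + 1) * 2 ^ a = q * 2 ^ a + 2 ^ a := by ring
      refine ⟨u' + p * 2 ^ a, v' + q * 2 ^ a, by omega, by omega, by omega, by omega, ?_⟩
      rw [mortonIndex_split a (m - t) u' v' p q ha hu' hv', hM, ← hbase]
      omega
  refine ⟨key, (2 ^ t) ^ 2 * mortonIndex (m - t) (p * 2 ^ a) (q * 2 ^ a), fun z => ?_⟩
  constructor
  · rintro ⟨i, j, hi1, hi2, hj1, hj2, rfl⟩
    have hu1 : p * 2 ^ a ≤ i / 2 ^ t := by
      rw [Nat.le_div_iff_mul_le hT0]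
      calc p * 2 ^ a * 2 ^ t = p * (2 ^ a * 2 ^ t) := by ring
        _ ≤ i := hi1
    have hu2 : i / 2 ^ t < (p + 1) * 2 ^ a := by
      rw [Nat.div_lt_iff_lt_mul hT0]
      calc i < (p + 1) * (2 ^ a * 2 ^ t) := hi2
        _ = (p + 1) * 2 ^ a * 2 ^ t := by ring
    have hv1 : q * 2 ^ a ≤ j / 2 ^ t := by
      rw [Nat.le_div_iff_mul_le hT0]
      calc q * 2 ^ a * 2 ^ t = q * (2 ^ a * 2 ^ t) := by ring
        _ ≤ j := hj1
    have hv2 : j / 2 ^ t < (q + 1) * 2 ^ a := by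
      rw [Nat.div_lt_iff_lt_mul hT0]
      calc j < (q + 1) * (2 ^ a * 2 ^ t) := hj2
        _ = (q + 1) * 2 ^ a * 2 ^ t := by ring
    obtain ⟨hM1, hM2⟩ := (key (mortonIndex (m - t) (i / 2 ^ t) (j / 2 ^ t))).mp
      ⟨_, _, hu1, hu2, hv1, hv2, rfl⟩
    unfold mhAddr
    have hri : i % 2 ^ t < 2 ^ t := Nat.mod_lt _ hT0
    have hrj : j % 2 ^ t < 2 ^ t := Nat.mod_lt _ hT0
    have hlow : i % 2 ^ t * 2 ^ t + j % 2 ^ t < (2 ^ t) ^ 2 := by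
      calc i % 2 ^ t * 2 ^ t + j % 2 ^ t < (i % 2 ^ t + 1) * 2 ^ t := by
            rw [add_mul, one_mul]; omega
        _ ≤ 2 ^ t * 2 ^ t := Nat.mul_le_mul_right _ (by omega)
        _ = (2 ^ t) ^ 2 := (sq _).symm
    constructor
    · calc (2 ^ t) ^ 2 * mortonIndex (m - t) (p * 2 ^ a) (q * 2 ^ a)
          ≤ (2 ^ t) ^ 2 * mortonIndex (m - t) (i / 2 ^ t) (j / 2 ^ t) :=
            Nat.mul_le_mul_left _ hM1
        _ ≤ _ := by omega
    · calc (2 ^ t) ^ 2 * mortonIndex (m - t) (i / 2 ^ t) (j / 2 ^ t) +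
            i % 2 ^ t * 2 ^ t + j % 2 ^ t
          < (2 ^ t) ^ 2 * (mortonIndex (m - t) (i / 2 ^ t) (j / 2 ^ t) + 1) := by
            rw [mul_add, mul_one]; omega
        _ ≤ (2 ^ t) ^ 2 * (mortonIndex (m - t) (p * 2 ^ a) (q * 2 ^ a) + 4 ^ a) :=
            Nat.mul_le_mul_left _ (by omega)
        _ = (2 ^ t) ^ 2 * mortonIndex (m - t) (p * 2 ^ a) (q * 2 ^ a) +
            4 ^ a * (2 ^ t) ^ 2 := by ring
  · rintro ⟨h1, h2⟩
    set B := mortonIndex (m - t) (p * 2 ^ a) (q * 2 ^ a) with hB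
    obtain ⟨d, hd⟩ : ∃ d, z = (2 ^ t) ^ 2 * B + d := ⟨z - (2 ^ t) ^ 2 * B, by omega⟩
    have hd4 : d < 4 ^ a * (2 ^ t) ^ 2 := by omega
    have he : d / (2 ^ t) ^ 2 < 4 ^ a := by
      rw [mul_comm] at hd4; exact Nat.div_lt_of_lt_mul hd4
    obtain ⟨u, v, hu1, hu2, hv1, hv2, hM⟩ :=
      (key (B + d / (2 ^ t) ^ 2)).mpr ⟨Nat.le_add_right _ _, Nat.add_lt_add_left he B⟩
    obtain ⟨f, hf⟩ : ∃ f, f = d % (2 ^ t) ^ 2 := ⟨_, rfl⟩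
    have hf2 : f < (2 ^ t) ^ 2 := hf ▸ Nat.mod_lt _ hA0
    have hr : f / 2 ^ t < 2 ^ t := Nat.div_lt_of_lt_mul (by rw [← sq]; exact hf2)
    have hc : f % 2 ^ t < 2 ^ t := Nat.mod_lt _ hT0
    refine ⟨u * 2 ^ t + f / 2 ^ t, v * 2 ^ t + f % 2 ^ t, ?_, ?_, ?_, ?_, ?_⟩
    · calc p * (2 ^ a * 2 ^ t) = p * 2 ^ a * 2 ^ t := by ring
        _ ≤ u * 2 ^ t := Nat.mul_le_mul_right _ hu1
        _ ≤ _ := Nat.le_add_right _ _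
    · calc u * 2 ^ t + f / 2 ^ t < (u + 1) * 2 ^ t := by rw [add_mul, one_mul]; omega
        _ ≤ (p + 1) * 2 ^ a * 2 ^ t := Nat.mul_le_mul_right _ (by omega)
        _ = (p + 1) * (2 ^ a * 2 ^ t) := by ring
    · calc q * (2 ^ a * 2 ^ t) = q * 2 ^ a * 2 ^ t := by ring
        _ ≤ v * 2 ^ t := Nat.mul_le_mul_right _ hv1
        _ ≤ _ := Nat.le_add_right _ _
    · calc v * 2 ^ t + f % 2 ^ t < (v + 1) * 2 ^ t := by rw [add_mul, one_mul]; omega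
        _ ≤ (q + 1) * 2 ^ a * 2 ^ t := Nat.mul_le_mul_right _ (by omega)
        _ = (q + 1) * (2 ^ a * 2 ^ t) := by ring
    · unfold mhAddr
      have ei : (u * 2 ^ t + f / 2 ^ t) / 2 ^ t = u := by
        rw [mul_comm, Nat.mul_add_div hT0, Nat.div_eq_of_lt hr, add_zero]
      have ej : (v * 2 ^ t + f % 2 ^ t) / 2 ^ t = v := by
        rw [mul_comm, Nat.mul_add_div hT0, Nat.div_eq_of_lt hc, add_zero]
      have emi : (u * 2 ^ t + f / 2 ^ t) % 2 ^ t = f / 2 ^ t := by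
        rw [mul_comm, Nat.mul_add_mod, Nat.mod_eq_of_lt hr]
      have emj : (v * 2 ^ t + f % 2 ^ t) % 2 ^ t = f % 2 ^ t := by
        rw [mul_comm, Nat.mul_add_mod, Nat.mod_mod_of_dvd f dvd_rfl]
      rw [ei, ej, emi, emj, hM]
      have h3 : (2 ^ t) ^ 2 * (B + d / (2 ^ t) ^ 2) =
          (2 ^ t) ^ 2 * B + (2 ^ t) ^ 2 * (d / (2 ^ t) ^ 2) := by ring
      have h4 : (2 ^ t) ^ 2 * (d / (2 ^ t) ^ 2) + f = d := by
        rw [hf]; exact Nat.div_add_mod d _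
      have h5 : f / 2 ^ t * 2 ^ t + f % 2 ^ t = f := Nat.div_add_mod' f _
      omega
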